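/- Let $X$ be a Banach space with the approximation property, and let $A, B, C$ be nonpositive operators with $A - B$ and $B - C$ nuclear (and suitable domain inclusions). Then for all $\lambda > 0$: $\Delta_{B/A}(\lambda)\,\Delta_{C/B}(\lambda) = \Delta_{C/A}(\lambda)$; in particular $\Delta_{B/A}(\lambda)\,\Delta_{A/B}(\lambda) = 1$. -/

import Mathlib

open MeasureTheory Set

variable {X : Type*} [NormedAddCommGroup X] [NormedSpace ℂ X] [CompleteSpace X]

/-- `R` is the resolvent of the (possibly unbounded) operator `A` at the real point `t`,
i.e. `R` is an everywhere defined two-sided bounded inverse of `t•I - A`. -/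
structure IsResolvent (A : X →ₗ.[ℂ] X) (t : ℝ) (R : X →L[ℂ] X) : Prop where
  mem : ∀ x : X, R x ∈ A.domain
  right_inv : ∀ x : X, (t : ℂ) • (R x) - A ⟨R x, mem x⟩ = x
  left_inv : ∀ x : A.domain, R ((t : ℂ) • (x : X) - A x) = x

/-- The sum of an unbounded operator and a bounded operator, defined on the domain of the
unbounded one. -/
noncomputable def pAdd (A : X →ₗ.[ℂ] X) (V : X →L[ℂ] X) : X →ₗ.[ℂ] X where
  domain := A.domain
  toFun := A.toFun + (V : X →ₗ[ℂ] X).comp A.domain.subtype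

/-- A symmetrically normed operator ideal in `L(X)`: a two-sided ideal with a complete norm
`inorm` dominating the operator norm and satisfying `‖A S B‖_I ≤ ‖A‖ ‖S‖_I ‖B‖`.
Completeness is encoded through closure under Bochner integration with a dominating
`I`-norm bound. -/
structure OperatorIdeal (X : Type*) [NormedAddCommGroup X] [NormedSpace ℂ X] where
  Mem : (X →L[ℂ] X) → Prop
  inorm : (X →L[ℂ] X) → ℝ
  zero_mem : Mem 0
  add_mem : ∀ {S T}, Mem S → Mem T → Mem (S + T)
  smul_mem : ∀ (c : ℂ) {S}, Mem S → Mem (c • S)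
  comp_mem : ∀ (A : X →L[ℂ] X) {S} (B : X →L[ℂ] X), Mem S → Mem (A.comp (S.comp B))
  inorm_nonneg : ∀ S, 0 ≤ inorm S
  inorm_add_le : ∀ S T, inorm (S + T) ≤ inorm S + inorm T
  inorm_smul : ∀ (c : ℂ) (S), inorm (c • S) = ‖c‖ * inorm S
  inorm_comp_le : ∀ (A S B : X →L[ℂ] X), Mem S →
    inorm (A.comp (S.comp B)) ≤ ‖A‖ * inorm S * ‖B‖
  opNorm_le_inorm : ∀ S, Mem S → ‖S‖ ≤ inorm S
  integral_mem : ∀ (μ : MeasureTheory.Measure ℝ) (f : ℝ → (X →L[ℂ] X)) (g : ℝ → ℝ),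
    MeasureTheory.Integrable g μ → (∀ᵐ t ∂μ, Mem (f t) ∧ inorm (f t) ≤ g t) →
    MeasureTheory.Integrable f μ →
    Mem (∫ t, f t ∂μ) ∧ inorm (∫ t, f t ∂μ) ≤ ∫ t, g t ∂μ

set_option linter.unusedSectionVars false

lemma first_resolvent (A : X →ₗ.[ℂ] X) (RA : ℝ → (X →L[ℂ] X))
    (hRA : ∀ t > (0:ℝ), IsResolvent A t (RA t))
    {s t : ℝ} (hs : 0 < s) (ht : 0 < t) (x : X) :
    RA s x - RA t x = ((t : ℂ) - (s : ℂ)) • RA t (RA s x) := by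
  have hy : RA s x ∈ A.domain := (hRA s hs).mem x
  have hx : (s:ℂ) • (RA s x) - A ⟨RA s x, hy⟩ = x := (hRA s hs).right_inv x
  have h2 : RA t ((t:ℂ) • (RA s x) - A ⟨RA s x, hy⟩) = RA s x :=
    (hRA t ht).left_inv ⟨RA s x, hy⟩
  set y := RA s x with hyd
  set a := (A ⟨y, hy⟩ : X) with had
  have h3 : (t:ℂ) • y - a = x + ((t:ℂ) - s) • y := by
    rw [← hx, sub_smul]; abel
  have h4 : RA t x + ((t:ℂ) - s) • RA t y = y := by
    rw [← (RA t).map_smul, ← (RA t).map_add, ← h3, h2]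
  exact sub_eq_iff_eq_add'.mpr h4.symm

lemma resolvent_continuousOn (A : X →ₗ.[ℂ] X) (RA : ℝ → (X →L[ℂ] X))
    (hRA : ∀ t > (0:ℝ), IsResolvent A t (RA t))
    (MA : ℝ) (hMA0 : 0 ≤ MA) (hMA : ∀ t > (0:ℝ), ‖RA t‖ ≤ MA / t) :
    ContinuousOn RA (Ioi (0:ℝ)) := by
  intro t0 ht0
  replace ht0 : (0:ℝ) < t0 := ht0
  have half : (0:ℝ) < t0 / 2 := by linarith
  have hnorm : ∀ s ∈ Ioi (t0/2), ‖RA s - RA t0‖ ≤ |t0 - s| * ((MA/t0) * (MA/(t0/2))) := by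
    intro s hs
    have hs0 : 0 < s := lt_trans half hs
    apply ContinuousLinearMap.opNorm_le_bound
    · positivity
    intro x
    have hk := first_resolvent A RA hRA hs0 ht0 x
    have hcast : ‖(t0:ℂ) - (s:ℂ)‖ = |t0 - s| := by
      rw [← Complex.ofReal_sub, Complex.norm_real, Real.norm_eq_abs]
    calc ‖(RA s - RA t0) x‖ = ‖(t0:ℂ) - (s:ℂ)‖ * ‖RA t0 (RA s x)‖ := by
          rw [ContinuousLinearMap.sub_apply, hk, norm_smul]
      _ ≤ |t0 - s| * (‖RA t0‖ * (‖RA s‖ * ‖x‖)) := by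
          rw [hcast]
          gcongr
          exact ((RA t0).le_opNorm _).trans (by gcongr; exact (RA s).le_opNorm x)
      _ ≤ |t0 - s| * ((MA/t0) * ((MA/(t0/2)) * ‖x‖)) := by
          gcongr
          · exact hMA t0 ht0
          · exact (hMA s hs0).trans (by gcongr; exact le_of_lt hs)
      _ = |t0 - s| * ((MA/t0) * (MA/(t0/2))) * ‖x‖ := by ring
  have hev : ∀ᶠ s in nhds t0, ‖RA s - RA t0‖ ≤ |t0 - s| * ((MA/t0) * (MA/(t0/2))) := by
    filter_upwards [Ioi_mem_nhds (by linarith : t0/2 < t0)] with s hs using hnorm s hs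
  have hg : Filter.Tendsto (fun s => |t0 - s| * ((MA/t0) * (MA/(t0/2)))) (nhds t0) (nhds 0) := by
    have hcont : Continuous fun s : ℝ => |t0 - s| := (continuous_const.sub continuous_id).abs
    have habs : Filter.Tendsto (fun s : ℝ => |t0 - s|) (nhds t0) (nhds 0) := by
      simpa using hcont.tendsto t0
    simpa using habs.mul_const ((MA/t0) * (MA/(t0/2)))
  have := squeeze_zero_norm' hev hg
  exact ContinuousAt.continuousWithinAt (tendsto_sub_nhds_zero_iff.mp this)

lemma second_resolvent (A B : X →ₗ.[ℂ] X) (RA RB : ℝ → (X →L[ℂ] X))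
    (hRA : ∀ t > (0:ℝ), IsResolvent A t (RA t))
    (hRB : ∀ t > (0:ℝ), IsResolvent B t (RB t))
    (hdom : A.domain ≤ B.domain)
    (W : X →L[ℂ] X)
    (hWext : ∀ x : A.domain, W (x : X) = B ⟨(x:X), hdom x.2⟩ - A x)
    {t : ℝ} (ht : 0 < t) :
    RB t - RA t = (RB t).comp (W.comp (RA t)) := by
  ext x
  have hy : RA t x ∈ A.domain := (hRA t ht).mem x
  have hx : (t:ℂ) • (RA t x) - A ⟨RA t x, hy⟩ = x := (hRA t ht).right_inv x
  have h2 : RB t ((t:ℂ) • (RA t x) - B ⟨RA t x, hdom hy⟩) = RA t x :=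
    (hRB t ht).left_inv ⟨RA t x, hdom hy⟩
  have hw : W (RA t x) = B ⟨RA t x, hdom hy⟩ - A ⟨RA t x, hy⟩ := hWext ⟨RA t x, hy⟩
  set y := RA t x with hyd
  set a := (A ⟨y, hy⟩ : X) with had
  set b := (B ⟨y, hdom hy⟩ : X) with hbd
  have h3 : x - ((t:ℂ) • y - b) = W y := by
    rw [hw, ← hx]; abel
  calc (RB t - RA t) x = RB t x - y := rfl
    _ = RB t x - RB t ((t:ℂ) • y - b) := by rw [h2]
    _ = RB t (x - ((t:ℂ) • y - b)) := ((RB t).map_sub x ((t:ℂ) • y - b)).symm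
    _ = RB t (W y) := by rw [h3]
    _ = ((RB t).comp (W.comp (RA t))) x := rfl

lemma pdet_aux (S1 : OperatorIdeal X)
    (A B : X →ₗ.[ℂ] X) (RA RB : ℝ → (X →L[ℂ] X))
    (hRA : ∀ t > (0:ℝ), IsResolvent A t (RA t))
    (hRB : ∀ t > (0:ℝ), IsResolvent B t (RB t))
    (MA MB : ℝ)
    (hMA : IsLUB ((fun t => t * ‖RA t‖) '' Ioi (0:ℝ)) MA)
    (hMB : IsLUB ((fun t => t * ‖RB t‖) '' Ioi (0:ℝ)) MB)
    (hdom : A.domain ≤ B.domain)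
    (W : X →L[ℂ] X) (hW : S1.Mem W)
    (hWext : ∀ x : A.domain, W (x : X) = B ⟨(x:X), hdom x.2⟩ - A x)
    (lam : ℝ) (hlam : 0 < lam) :
    IntegrableOn (fun t => RB t - RA t) (Ioi lam) ∧
      S1.Mem (∫ t in Ioi lam, (RB t - RA t)) := by
  have bound : ∀ (R : ℝ → (X →L[ℂ] X)) (M : ℝ),
      IsLUB ((fun t => t * ‖R t‖) '' Ioi (0:ℝ)) M →
      (0 ≤ M ∧ ∀ t > (0:ℝ), ‖R t‖ ≤ M / t) := by
    intro R M hM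
    have hub : ∀ t > (0:ℝ), t * ‖R t‖ ≤ M := fun t ht =>
      hM.1 (mem_image_of_mem _ (mem_Ioi.mpr ht))
    have hM0 : 0 ≤ M := le_trans (by positivity) (hub 1 one_pos)
    exact ⟨hM0, fun t ht => (le_div_iff₀ ht).mpr (by linarith [hub t ht])⟩
  obtain ⟨hMA0, hMAb⟩ := bound RA MA hMA
  obtain ⟨hMB0, hMBb⟩ := bound RB MB hMB
  have hsub : Ioi lam ⊆ Ioi (0:ℝ) := Ioi_subset_Ioi hlam.le
  have hcf : ContinuousOn (fun t => RB t - RA t) (Ioi lam) :=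
    ((resolvent_continuousOn B RB hRB MB hMB0 hMBb).mono hsub).sub
      ((resolvent_continuousOn A RA hRA MA hMA0 hMAb).mono hsub)
  haveI : SecondCountableTopologyEither ℝ (X →L[ℂ] X) :=
    ⟨Or.inl inferInstance⟩
  have hfm := hcf.aestronglyMeasurable measurableSet_Ioi (μ := volume)
  set K := MB * S1.inorm W * MA with hK
  have hK0 : 0 ≤ K := by
    have := S1.inorm_nonneg W; positivity
  set g := fun t : ℝ => K * t ^ (-2:ℝ) with hg
  have hgint : IntegrableOn g (Ioi lam) :=
    (integrableOn_Ioi_rpow_of_lt (by norm_num) hlam).const_mul K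
  have key : ∀ t ∈ Ioi lam, S1.Mem (RB t - RA t) ∧ S1.inorm (RB t - RA t) ≤ g t := by
    intro t ht
    have ht0 : 0 < t := lt_trans hlam ht
    rw [second_resolvent A B RA RB hRA hRB hdom W hWext ht0]
    refine ⟨S1.comp_mem _ _ hW, ?_⟩
    have hrp : t ^ (-2:ℝ) = 1 / (t * t) := by
      rw [show (-2:ℝ) = ((-2 : ℤ) : ℝ) by norm_num, Real.rpow_intCast]
      rw [zpow_neg, show ((2:ℤ)) = ((2:ℕ):ℤ) by norm_num, zpow_natCast]
      rw [sq]; simp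
    calc S1.inorm ((RB t).comp (W.comp (RA t))) ≤ ‖RB t‖ * S1.inorm W * ‖RA t‖ :=
          S1.inorm_comp_le _ _ _ hW
      _ ≤ (MB / t) * S1.inorm W * (MA / t) :=
          mul_le_mul (mul_le_mul (hMBb t ht0) le_rfl (S1.inorm_nonneg W)
              (div_nonneg hMB0 ht0.le)) (hMAb t ht0) (norm_nonneg _)
            (mul_nonneg (div_nonneg hMB0 ht0.le) (S1.inorm_nonneg W))
      _ = g t := by
          show _ = K * t ^ (-2:ℝ)
          rw [hrp, hK]
          field_simp
  have haeb : ∀ᵐ t ∂(volume.restrict (Ioi lam)),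
      S1.Mem (RB t - RA t) ∧ S1.inorm (RB t - RA t) ≤ g t :=
    (ae_restrict_iff' measurableSet_Ioi).mpr (ae_of_all _ key)
  have hfint : IntegrableOn (fun t => RB t - RA t) (Ioi lam) := by
    refine hgint.mono' hfm ?_
    refine (ae_restrict_iff' measurableSet_Ioi).mpr (ae_of_all _ fun t ht => ?_)
    exact le_trans (S1.opNorm_le_inorm _ (key t ht).1) (key t ht).2
  exact ⟨hfint, (S1.integral_mem (volume.restrict (Ioi lam)) _ g hgint haeb hfint).1⟩


/-- The perturbation determinant `Δ_{B/A}(λ) = exp(tr(ψ_λ(B) - ψ_λ(A)))`, where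
`ψ_λ(s) = log λ - log(λ - s)` and, via the Hirsch calculus,
`ψ_λ(B) - ψ_λ(A) = ∫_λ^∞ (R(t,B) - R(t,A)) dt`, expressed through the resolvents
`RA, RB` of `A`, `B` and a trace `tr` on the nuclear operators. -/
noncomputable def pdet {X : Type*} [NormedAddCommGroup X] [NormedSpace ℂ X]
    [CompleteSpace X] (tr : (X →L[ℂ] X) → ℂ) (RA RB : ℝ → (X →L[ℂ] X)) (lam : ℝ) : ℂ :=
  Complex.exp (tr (∫ t in Ioi lam, (RB t - RA t)))

/-- Multiplicativity of the perturbation determinant: for nonpositive operators `A, B, C`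
with nuclear differences, `Δ_{B/A}(λ) Δ_{C/B}(λ) = Δ_{C/A}(λ)` for all `λ > 0`; in
particular `Δ_{B/A}(λ) Δ_{A/B}(λ) = 1`.  Here `S1` is the ideal of nuclear operators on a
space with the approximation property, with its continuous linear trace `tr`. -/
theorem pdet_multiplicative
    (S1 : OperatorIdeal X) (tr : (X →L[ℂ] X) → ℂ)
    (htr_add : ∀ S T : X →L[ℂ] X, S1.Mem S → S1.Mem T → tr (S + T) = tr S + tr T)
    (htr_smul : ∀ (c : ℂ) (S : X →L[ℂ] X), S1.Mem S → tr (c • S) = c * tr S)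
    (htr_bound : ∀ S : X →L[ℂ] X, S1.Mem S → ‖tr S‖ ≤ S1.inorm S)
    (A B C : X →ₗ.[ℂ] X)
    (hAclosed : IsClosed (A.graph : Set (X × X)))
    (hBclosed : IsClosed (B.graph : Set (X × X)))
    (hCclosed : IsClosed (C.graph : Set (X × X)))
    (hAdense : Dense (A.domain : Set X)) (hBdense : Dense (B.domain : Set X))
    (hCdense : Dense (C.domain : Set X))
    (RA RB RC : ℝ → (X →L[ℂ] X))
    (hRA : ∀ t > (0 : ℝ), IsResolvent A t (RA t))
    (hRB : ∀ t > (0 : ℝ), IsResolvent B t (RB t))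
    (hRC : ∀ t > (0 : ℝ), IsResolvent C t (RC t))
    (MA MB MC : ℝ)
    (hMA : IsLUB ((fun t => t * ‖RA t‖) '' Ioi (0 : ℝ)) MA)
    (hMB : IsLUB ((fun t => t * ‖RB t‖) '' Ioi (0 : ℝ)) MB)
    (hMC : IsLUB ((fun t => t * ‖RC t‖) '' Ioi (0 : ℝ)) MC)
    (hdomAB : A.domain ≤ B.domain) (hdomBC : B.domain ≤ C.domain)
    -- `B - A` and `C - B` are nuclear, with bounded extensions `W1`, `W2`:
    (W1 : X →L[ℂ] X) (hW1 : S1.Mem W1)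
    (hW1ext : ∀ x : A.domain, W1 (x : X) = B ⟨(x : X), hdomAB x.2⟩ - A x)
    (W2 : X →L[ℂ] X) (hW2 : S1.Mem W2)
    (hW2ext : ∀ x : B.domain, W2 (x : X) = C ⟨(x : X), hdomBC x.2⟩ - B x) :
    ∀ lam > (0 : ℝ),
      pdet tr RA RB lam * pdet tr RB RC lam = pdet tr RA RC lam ∧
        pdet tr RA RB lam * pdet tr RB RA lam = 1 := by
  intro lam hlam
  obtain ⟨hint1, hmem1⟩ :=
    pdet_aux S1 A B RA RB hRA hRB MA MB hMA hMB hdomAB W1 hW1 hW1ext lam hlam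
  obtain ⟨hint2, hmem2⟩ :=
    pdet_aux S1 B C RB RC hRB hRC MB MC hMB hMC hdomBC W2 hW2 hW2ext lam hlam
  have hI3 : (∫ t in Ioi lam, (RC t - RA t)) =
      (∫ t in Ioi lam, (RB t - RA t)) + ∫ t in Ioi lam, (RC t - RB t) := by
    rw [← integral_add hint1 hint2]
    congr 1
    funext t
    abel
  set I1 := ∫ t in Ioi lam, (RB t - RA t) with hI1d
  set I2 := ∫ t in Ioi lam, (RC t - RB t) with hI2d
  constructor
  · simp only [pdet]
    rw [← Complex.exp_add, ← htr_add _ _ hmem1 hmem2, ← hI3]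
  · have hneg : (∫ t in Ioi lam, (RA t - RB t)) = -I1 := by
      rw [hI1d, ← integral_neg]
      congr 1
      funext t
      abel
    have htrneg : tr (-I1) = -tr I1 := by
      have h := htr_smul (-1) I1 hmem1
      rw [show ((-1 : ℂ)) • I1 = -I1 from neg_one_smul ℂ I1, neg_one_mul] at h
      exact h
    simp only [pdet]
    rw [hneg, htrneg, ← Complex.exp_add]
    rw [add_neg_cancel, Complex.exp_zero]
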